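/- arXiv:2003.04982 — 3 statements merged into one kernel-verified Lean document; each statement's English description precedes it below -/
import Mathlib

section
/- If f : (0,∞) → ℝ is measurable, |f(t)| ≤ C e^{ct} for t ≥ 1, and f(t) = A t^{ν} + o(t^{ν}) as t → 0⁺ with ν > -1, then the Laplace transform satisfies L(f)(p) = A Γ(ν+1) p^{-ν-1} + o(p^{-ν-1}) as p → ∞ along the reals. -/
open MeasureTheory Set Filter Asymptotics

private lemma lap_pow_int {ν : ℝ} (hν : -1 < ν) {p : ℝ} (hp : 0 < p) :
    IntegrableOn (fun t => Real.exp (-p * t) * t ^ ν) (Ioi (0:ℝ)) := by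
  have h := integrableOn_rpow_mul_exp_neg_mul_rpow (s := ν) (p := 1) (b := p) hν one_pos hp
  refine IntegrableOn.congr_fun h (fun t ht => ?_) measurableSet_Ioi
  rw [Real.rpow_one]; ring

private lemma lap_pow_eq {ν : ℝ} (hν : -1 < ν) {p : ℝ} (hp : 0 < p) :
    ∫ t in Ioi (0:ℝ), Real.exp (-p * t) * t ^ ν = Real.Gamma (ν + 1) * p ^ (-ν - 1) := by
  have h := Real.integral_rpow_mul_exp_neg_mul_Ioi (a := ν + 1) (r := p) (by linarith) hp
  have h2 : ∫ t in Ioi (0:ℝ), Real.exp (-p * t) * t ^ ν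
      = ∫ t in Ioi (0:ℝ), t ^ (ν + 1 - 1) * Real.exp (-(p * t)) := by
    refine setIntegral_congr_fun measurableSet_Ioi (fun t ht => ?_)
    rw [add_sub_cancel_right, neg_mul]; ring
  rw [h2, h, one_div, Real.inv_rpow hp.le, ← Real.rpow_neg hp.le,
    show -(ν + 1) = -ν - 1 by ring, mul_comm]

private lemma lap_f_int {f : ℝ → ℝ} (hf : Measurable f) {C c p : ℝ} (hp0 : 0 < p) (hpc : c < p)
    (hbound : ∀ t ≥ (1 : ℝ), |f t| ≤ C * Real.exp (c * t))
    (hloc : IntegrableOn f (Ioc 0 1)) :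
    IntegrableOn (fun t => Real.exp (-p * t) * f t) (Ioi (0:ℝ)) := by
  have hmeas : Measurable fun t => Real.exp (-p * t) * f t := by fun_prop
  have h1 : IntegrableOn (fun t => Real.exp (-p * t) * f t) (Ioc (0:ℝ) 1) := by
    refine Integrable.mono' hloc.norm hmeas.aestronglyMeasurable ?_
    filter_upwards [ae_restrict_mem measurableSet_Ioc] with t ht
    rw [Real.norm_eq_abs, abs_mul, abs_of_pos (Real.exp_pos _), Real.norm_eq_abs]
    have : Real.exp (-p * t) ≤ 1 := by
      rw [Real.exp_le_one_iff]; nlinarith [ht.1]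
    nlinarith [abs_nonneg (f t)]
  have h2 : IntegrableOn (fun t => Real.exp (-p * t) * f t) (Ioi (1:ℝ)) := by
    have hInt : IntegrableOn (fun t => C * Real.exp (-(p - c) * t)) (Ioi (1:ℝ)) :=
      (exp_neg_integrableOn_Ioi 1 (by linarith)).const_mul C
    refine Integrable.mono' hInt hmeas.aestronglyMeasurable ?_
    filter_upwards [ae_restrict_mem measurableSet_Ioi] with t ht
    have hb := hbound t (le_of_lt ht)
    have h2 : (0:ℝ) < Real.exp (-p * t) := Real.exp_pos _
    rw [Real.norm_eq_abs, abs_mul, abs_of_pos h2]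
    calc Real.exp (-p * t) * |f t| ≤ Real.exp (-p * t) * (C * Real.exp (c * t)) :=
          mul_le_mul_of_nonneg_left hb h2.le
      _ = C * (Real.exp (-p * t) * Real.exp (c * t)) := by ring
      _ = C * Real.exp (-(p - c) * t) := by rw [← Real.exp_add]; ring_nf
  rw [← Ioc_union_Ioi_eq_Ioi (zero_le_one (α := ℝ))]
  exact h1.union h2

theorem abelian_laplace_at_top (f : ℝ → ℝ) (hf : Measurable f) (C c : ℝ)
    (hbound : ∀ t ≥ (1 : ℝ), |f t| ≤ C * Real.exp (c * t))
    (hloc : IntegrableOn f (Ioc 0 1))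
    (A ν : ℝ) (hν : -1 < ν)
    (hasymp : (fun t => f t - A * t ^ ν) =o[nhdsWithin 0 (Ioi 0)] fun t => t ^ ν) :
    (fun p => (∫ t in Ioi (0 : ℝ), Real.exp (-p * t) * f t)
        - A * Real.Gamma (ν + 1) * p ^ (-ν - 1)) =o[atTop] fun p => p ^ (-ν - 1) := by
  set g : ℝ → ℝ := fun t => f t - A * t ^ ν with hg
  have hgmeas : Measurable g := by simp only [hg]; fun_prop
  have hΓpos : 0 < Real.Gamma (ν + 1) := Real.Gamma_pos_of_pos (by linarith)
  set p₀ : ℝ := max (c + 1) 1 with hp₀def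
  have hp₀1 : (1:ℝ) ≤ p₀ := le_max_right _ _
  have hp₀c : c < p₀ := lt_of_lt_of_le (by linarith) (le_max_left _ _)
  have hp₀0 : (0:ℝ) < p₀ := by linarith
  -- integrability of the remainder integrand
  have hIntg : ∀ p : ℝ, p₀ ≤ p → IntegrableOn (fun t => Real.exp (-p * t) * g t) (Ioi (0:ℝ)) := by
    intro p hp
    have h1 := lap_f_int hf (by linarith : (0:ℝ) < p) (by linarith : c < p) hbound hloc
    have h2 := (lap_pow_int hν (by linarith : (0:ℝ) < p)).const_mul A
    refine (h1.sub h2).congr (Eventually.of_forall fun t => ?_)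
    simp only [hg, Pi.sub_apply]; ring
  -- key rewriting
  have hkey : ∀ p : ℝ, p₀ ≤ p →
      (∫ t in Ioi (0 : ℝ), Real.exp (-p * t) * f t) - A * Real.Gamma (ν + 1) * p ^ (-ν - 1)
        = ∫ t in Ioi (0:ℝ), Real.exp (-p * t) * g t := by
    intro p hp
    have hp0 : (0:ℝ) < p := by linarith
    have h1 := lap_f_int hf hp0 (by linarith : c < p) hbound hloc
    have h2 := (lap_pow_int hν hp0).const_mul A
    rw [mul_assoc, ← lap_pow_eq hν hp0, ← integral_const_mul, ← integral_sub h1 h2]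
    refine setIntegral_congr_fun measurableSet_Ioi (fun t ht => ?_)
    simp only [hg]; ring
  -- reduce to the remainder term
  suffices hsuff : (fun p => ∫ t in Ioi (0:ℝ), Real.exp (-p * t) * g t)
      =o[atTop] fun p => p ^ (-ν - 1) by
    refine hsuff.congr' ?_ EventuallyEq.rfl
    filter_upwards [eventually_ge_atTop p₀] with p hp
    exact (hkey p hp).symm
  rw [isLittleO_iff]
  intro ε hε
  set ε₁ : ℝ := ε / (2 * Real.Gamma (ν + 1)) with hε₁def
  have hε₁ : 0 < ε₁ := by positivity
  have hasymp' := hasymp.def hε₁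
  rw [eventually_nhdsWithin_iff, Metric.eventually_nhds_iff] at hasymp'
  obtain ⟨δ, hδ0, hδ⟩ := hasymp'
  set d : ℝ := δ / 2 with hddef
  have hd0 : 0 < d := by positivity
  -- pointwise bound near 0
  have hsmall : ∀ t ∈ Ioc (0:ℝ) d, |g t| ≤ ε₁ * t ^ ν := by
    intro t ht
    have h2 : dist t 0 < δ := by
      rw [Real.dist_eq, sub_zero, abs_of_pos ht.1]; linarith [ht.2]
    have h3 := hδ h2 ht.1
    rwa [Real.norm_eq_abs, Real.norm_eq_abs,
      abs_of_pos (Real.rpow_pos_of_pos ht.1 ν)] at h3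
  -- the tail integral M
  have hMint : IntegrableOn (fun t => Real.exp (-p₀ * t) * |g t|) (Ioi d) := by
    have h := ((hIntg p₀ le_rfl).mono_set (Ioi_subset_Ioi hd0.le)).norm
    refine IntegrableOn.congr_fun h (fun t ht => ?_) measurableSet_Ioi
    rw [Real.norm_eq_abs, abs_mul, abs_of_pos (Real.exp_pos _)]
  set M : ℝ := ∫ t in Ioi d, Real.exp (-p₀ * t) * |g t| with hMdef
  have hM0 : 0 ≤ M := setIntegral_nonneg measurableSet_Ioi fun t ht => by positivity
  -- exponential decay beats the power
  have htend : Tendsto (fun p : ℝ => (M * Real.exp (p₀ * d)) * (p ^ (ν + 1) * Real.exp (-d * p)))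
      atTop (nhds 0) := by
    have h := tendsto_rpow_mul_exp_neg_mul_atTop_nhds_zero (ν + 1) d hd0
    simpa using h.const_mul (M * Real.exp (p₀ * d))
  have hev : ∀ᶠ p in atTop,
      (M * Real.exp (p₀ * d)) * (p ^ (ν + 1) * Real.exp (-d * p)) ≤ ε / 2 :=
    htend.eventually_le_const (by positivity)
  filter_upwards [hev, eventually_ge_atTop p₀] with p hp2 hp1
  have hp0 : 0 < p := lt_of_lt_of_le hp₀0 hp1
  have hppos : 0 < p ^ (-ν - 1) := Real.rpow_pos_of_pos hp0 _
  rw [Real.norm_eq_abs, Real.norm_eq_abs, abs_of_pos hppos]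
  have hint : IntegrableOn (fun t => Real.exp (-p * t) * g t) (Ioi (0:ℝ)) := hIntg p hp1
  have hint1 := hint.mono_set (Ioc_subset_Ioi_self : Ioc (0:ℝ) d ⊆ Ioi 0)
  have hint2 := hint.mono_set (Ioi_subset_Ioi hd0.le)
  have hsplit : (∫ t in Ioi (0:ℝ), Real.exp (-p * t) * g t)
      = (∫ t in Ioc (0:ℝ) d, Real.exp (-p * t) * g t)
        + ∫ t in Ioi d, Real.exp (-p * t) * g t := by
    rw [← setIntegral_union (Ioc_disjoint_Ioi le_rfl) measurableSet_Ioi hint1 hint2,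
      Ioc_union_Ioi_eq_Ioi hd0.le]
  -- bound near 0
  have hb1 : |∫ t in Ioc (0:ℝ) d, Real.exp (-p * t) * g t| ≤ ε / 2 * p ^ (-ν - 1) := by
    have step1 : |∫ t in Ioc (0:ℝ) d, Real.exp (-p * t) * g t|
        ≤ ∫ t in Ioc (0:ℝ) d, ε₁ * (Real.exp (-p * t) * t ^ ν) := by
      rw [← Real.norm_eq_abs]
      refine (norm_integral_le_integral_norm _).trans ?_
      refine setIntegral_mono_on hint1.norm
        (((lap_pow_int hν hp0).mono_set Ioc_subset_Ioi_self).const_mul ε₁)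
        measurableSet_Ioc (fun t ht => ?_)
      rw [Real.norm_eq_abs, abs_mul, abs_of_pos (Real.exp_pos _)]
      have h1 := hsmall t ht
      have h2 : (0:ℝ) < Real.exp (-p * t) := Real.exp_pos _
      nlinarith
    have step2 : (∫ t in Ioc (0:ℝ) d, Real.exp (-p * t) * t ^ ν)
        ≤ ∫ t in Ioi (0:ℝ), Real.exp (-p * t) * t ^ ν := by
      refine setIntegral_mono_set (lap_pow_int hν hp0) ?_
        (HasSubset.Subset.eventuallyLE Ioc_subset_Ioi_self)
      filter_upwards [ae_restrict_mem measurableSet_Ioi] with t ht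
      have := Real.rpow_pos_of_pos ht ν
      positivity
    calc |∫ t in Ioc (0:ℝ) d, Real.exp (-p * t) * g t|
        ≤ ∫ t in Ioc (0:ℝ) d, ε₁ * (Real.exp (-p * t) * t ^ ν) := step1
      _ = ε₁ * ∫ t in Ioc (0:ℝ) d, Real.exp (-p * t) * t ^ ν := integral_const_mul _ _
      _ ≤ ε₁ * ∫ t in Ioi (0:ℝ), Real.exp (-p * t) * t ^ ν :=
            mul_le_mul_of_nonneg_left step2 hε₁.le
      _ = ε₁ * (Real.Gamma (ν + 1) * p ^ (-ν - 1)) := by rw [lap_pow_eq hν hp0]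
      _ = ε / 2 * p ^ (-ν - 1) := by
            rw [hε₁def]; field_simp
  -- bound on the tail
  have hb2 : |∫ t in Ioi d, Real.exp (-p * t) * g t| ≤ ε / 2 * p ^ (-ν - 1) := by
    have step1 : |∫ t in Ioi d, Real.exp (-p * t) * g t|
        ≤ Real.exp (-(p - p₀) * d) * M := by
      have h : |∫ t in Ioi d, Real.exp (-p * t) * g t|
          ≤ ∫ t in Ioi d, Real.exp (-(p - p₀) * d) * (Real.exp (-p₀ * t) * |g t|) := by
        rw [← Real.norm_eq_abs]
        refine (norm_integral_le_integral_norm _).trans ?_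
        refine setIntegral_mono_on hint2.norm (hMint.const_mul _)
          measurableSet_Ioi (fun t ht => ?_)
        rw [Real.norm_eq_abs, abs_mul, abs_of_pos (Real.exp_pos _)]
        have hkey : Real.exp (-p * t) ≤ Real.exp (-(p - p₀) * d) * Real.exp (-p₀ * t) := by
          rw [← Real.exp_add, Real.exp_le_exp]
          have ht' : d ≤ t := le_of_lt ht
          nlinarith
        nlinarith [abs_nonneg (g t), Real.exp_pos (-p₀ * t), Real.exp_pos (-(p - p₀) * d)]
      rwa [integral_const_mul, ← hMdef] at h
    have hpp : p ^ (-ν - 1) * p ^ (ν + 1) = 1 := by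
      rw [← Real.rpow_add hp0]; norm_num
    have hX : Real.exp (-(p - p₀) * d) * M
        = p ^ (-ν - 1) * ((M * Real.exp (p₀ * d)) * (p ^ (ν + 1) * Real.exp (-d * p))) := by
      rw [show -(p - p₀) * d = p₀ * d + -d * p by ring, Real.exp_add]
      linear_combination (-(M * Real.exp (p₀ * d) * Real.exp (-d * p))) * hpp
    calc |∫ t in Ioi d, Real.exp (-p * t) * g t|
        ≤ Real.exp (-(p - p₀) * d) * M := step1
      _ = p ^ (-ν - 1) * ((M * Real.exp (p₀ * d)) * (p ^ (ν + 1) * Real.exp (-d * p))) := hX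
      _ ≤ p ^ (-ν - 1) * (ε / 2) := mul_le_mul_of_nonneg_left hp2 hppos.le
      _ = ε / 2 * p ^ (-ν - 1) := mul_comm _ _
  calc |∫ t in Ioi (0:ℝ), Real.exp (-p * t) * g t|
      = |(∫ t in Ioc (0:ℝ) d, Real.exp (-p * t) * g t)
          + ∫ t in Ioi d, Real.exp (-p * t) * g t| := by rw [hsplit]
    _ ≤ |∫ t in Ioc (0:ℝ) d, Real.exp (-p * t) * g t|
          + |∫ t in Ioi d, Real.exp (-p * t) * g t| := abs_add_le _ _
    _ ≤ ε / 2 * p ^ (-ν - 1) + ε / 2 * p ^ (-ν - 1) := add_le_add hb1 hb2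
    _ = ε * p ^ (-ν - 1) := by ring
end

section
/- If f : (0,∞) → ℝ is measurable, locally integrable, and f(t) = A t^{ν} + o(t^{ν}) as t → ∞ with ν > -1, and f is bounded near 0, then L(f)(p) = A Γ(ν+1) p^{-ν-1} + o(p^{-ν-1}) as p → 0⁺. -/
open MeasureTheory Set Filter Asymptotics

theorem abelian_laplace_at_zero (f : ℝ → ℝ) (hf : Measurable f)
    (hloc : LocallyIntegrableOn f (Ioi 0))
    (hbdd : ∃ M, ∀ t ∈ Ioc (0 : ℝ) 1, |f t| ≤ M)
    (A ν : ℝ) (hν : -1 < ν)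
    (hasymp : (fun t => f t - A * t ^ ν) =o[atTop] fun t => t ^ ν) :
    (fun p => (∫ t in Ioi (0 : ℝ), Real.exp (-p * t) * f t)
        - A * Real.Gamma (ν + 1) * p ^ (-ν - 1))
      =o[nhdsWithin 0 (Ioi 0)] fun p => p ^ (-ν - 1) := by
  obtain ⟨M, hM⟩ := hbdd
  set g : ℝ → ℝ := fun t => f t - A * t ^ ν with hg_def
  have hν1 : (0:ℝ) < ν + 1 := by linarith
  have hrpow_meas : Measurable (fun t : ℝ => t ^ ν) := by fun_prop
  have hg_meas : Measurable g := by fun_prop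
  -- integrability of t^ν on Ioc 0 T
  have htν : ∀ T : ℝ, 0 < T → IntegrableOn (fun t => t ^ ν) (Ioc 0 T) := by
    intro T hT
    rw [← intervalIntegrable_iff_integrableOn_Ioc_of_le hT.le]
    exact intervalIntegral.intervalIntegrable_rpow' hν
  -- integrability of f on Ioc 0 T
  have hfI : ∀ T : ℝ, 0 < T → IntegrableOn f (Ioc 0 T) := by
    intro T hT
    have h1 : IntegrableOn f (Ioc 0 1) := by
      refine Integrable.mono' (integrable_const M) hf.aestronglyMeasurable.restrict ?_
      rw [ae_restrict_iff' measurableSet_Ioc]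
      exact ae_of_all _ fun t ht => by simpa [Real.norm_eq_abs] using hM t ht
    have h2 : IntegrableOn f (Icc 1 (max 1 T)) := by
      refine hloc.integrableOn_compact_subset (fun x hx => ?_) isCompact_Icc
      exact lt_of_lt_of_le one_pos hx.1
    refine (h1.union h2).mono_set fun t ht => ?_
    rcases le_or_gt t 1 with h | h
    · exact Or.inl ⟨ht.1, h⟩
    · exact Or.inr ⟨h.le, le_trans ht.2 (le_max_right _ _)⟩
  have hgI : ∀ T : ℝ, 0 < T → IntegrableOn g (Ioc 0 T) := fun T hT =>
    (hfI T hT).sub ((htν T hT).const_mul A)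
  -- integrability of t^ν * exp(-p t) on Ioi 0, and its value
  have hexp_int : ∀ p : ℝ, 0 < p →
      IntegrableOn (fun t => t ^ ν * Real.exp (-p * t)) (Ioi 0) := by
    intro p hp
    simpa using integrableOn_rpow_mul_exp_neg_mul_rpow hν one_pos hp
  have hval : ∀ p : ℝ, 0 < p →
      ∫ t in Ioi (0:ℝ), t ^ ν * Real.exp (-p * t)
        = Real.Gamma (ν + 1) * p ^ (-ν - 1) := by
    intro p hp
    have := integral_rpow_mul_exp_neg_mul_rpow (one_pos) hν hp (q := ν)
    simp only [Real.rpow_one, div_one, one_div] at this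
    rw [this, show -ν-1 = -(ν+1) by ring]
    ring
  -- the asymptotic bound with constant 1
  obtain ⟨T₀, hT₀1, hT₀⟩ : ∃ T₀ : ℝ, 1 ≤ T₀ ∧ ∀ t, T₀ ≤ t → |g t| ≤ t ^ ν := by
    have h1 := (hasymp.def one_pos).and (eventually_ge_atTop (1:ℝ))
    rw [eventually_atTop] at h1
    obtain ⟨T, hT⟩ := h1
    refine ⟨max T 1, le_max_right _ _, fun t ht => ?_⟩
    have := hT t (le_trans (le_max_left _ _) ht)
    have h1t : (1:ℝ) ≤ t := le_trans (le_max_right _ _) ht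
    have : |g t| ≤ 1 * |t ^ ν| := this.1
    rwa [one_mul, abs_of_nonneg (Real.rpow_nonneg (by linarith) ν)] at this
  have hT₀pos : (0:ℝ) < T₀ := lt_of_lt_of_le one_pos hT₀1
  -- integrability of exp(-pt) * f on Ioi 0
  have hfint : ∀ p : ℝ, 0 < p →
      IntegrableOn (fun t => Real.exp (-p * t) * f t) (Ioi 0) := by
    intro p hp
    rw [← Ioc_union_Ioi_eq_Ioi hT₀pos.le]
    refine IntegrableOn.union ?_ ?_
    · refine Integrable.mono' (hfI T₀ hT₀pos).abs
        (by fun_prop : Measurable fun t => Real.exp (-p*t) * f t).aestronglyMeasurable.restrict ?_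
      rw [ae_restrict_iff' measurableSet_Ioc]
      refine ae_of_all _ fun t ht => ?_
      have he : Real.exp (-p * t) ≤ 1 := by
        rw [Real.exp_le_one_iff]
        nlinarith [ht.1]
      have he0 : 0 < Real.exp (-p * t) := Real.exp_pos _
      rw [Real.norm_eq_abs, abs_mul, abs_of_pos he0]
      calc Real.exp (-p*t) * |f t| ≤ 1 * |f t| := by
            apply mul_le_mul_of_nonneg_right he (abs_nonneg _)
        _ = |f t| := one_mul _
    · refine Integrable.mono'
        (((hexp_int p hp).mono_set (Ioi_subset_Ioi hT₀pos.le)).const_mul (|A|+1))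
        (by fun_prop : Measurable fun t => Real.exp (-p*t) * f t).aestronglyMeasurable.restrict ?_
      rw [ae_restrict_iff' measurableSet_Ioi]
      refine ae_of_all _ fun t ht => ?_
      have ht0 : (0:ℝ) < t := lt_of_lt_of_le hT₀pos (le_of_lt ht)
      have htν0 : (0:ℝ) ≤ t ^ ν := Real.rpow_nonneg ht0.le ν
      have he0 : 0 < Real.exp (-p * t) := Real.exp_pos _
      have hft : |f t| ≤ (|A|+1) * t ^ ν := by
        have h1 := hT₀ t (le_of_lt ht)
        have h2 : |f t| ≤ |g t| + |A * t ^ ν| := by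
          simpa [hg_def] using abs_add_le (g t) (A * t ^ ν)
        rw [abs_mul, abs_of_nonneg htν0] at h2
        nlinarith
      rw [Real.norm_eq_abs, abs_mul, abs_of_pos he0]
      calc Real.exp (-p*t) * |f t| ≤ Real.exp (-p*t) * ((|A|+1) * t ^ ν) := by
            apply mul_le_mul_of_nonneg_left hft he0.le
        _ = (|A|+1) * (t ^ ν * Real.exp (-p*t)) := by ring
  -- rewrite the difference as the integral of exp(-pt) * g
  have key : ∀ p : ℝ, 0 < p →
      (∫ t in Ioi (0:ℝ), Real.exp (-p * t) * f t)
          - A * Real.Gamma (ν + 1) * p ^ (-ν - 1)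
        = ∫ t in Ioi (0:ℝ), Real.exp (-p * t) * g t := by
    intro p hp
    have hAint : IntegrableOn (fun t => Real.exp (-p*t) * (A * t ^ ν)) (Ioi 0) :=
      (((hexp_int p hp).const_mul A).congr (ae_of_all _ fun t => by ring) : _)
    have h2 : ∫ t in Ioi (0:ℝ), Real.exp (-p*t) * (A * t ^ ν)
        = A * (Real.Gamma (ν+1) * p ^ (-ν-1)) := by
      rw [← hval p hp, ← integral_const_mul]
      exact setIntegral_congr_fun measurableSet_Ioi fun t _ => by ring
    rw [mul_assoc, ← h2, ← integral_sub (hfint p hp) hAint]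
    exact setIntegral_congr_fun measurableSet_Ioi fun t _ => by simp [hg_def]; ring
  -- main estimate
  have hΓpos : 0 < Real.Gamma (ν + 1) := Real.Gamma_pos_of_pos hν1
  rw [isLittleO_iff]
  intro ε hε
  set δ : ℝ := ε / (2 * (Real.Gamma (ν + 1) + 1)) with hδ_def
  have hδpos : 0 < δ := by positivity
  obtain ⟨T₁, hT₁⟩ := eventually_atTop.1 ((hasymp.def hδpos).and (eventually_ge_atTop T₀))
  set T : ℝ := max T₀ T₁ with hT_def
  have hTpos : 0 < T := lt_of_lt_of_le hT₀pos (le_max_left _ _)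
  have hTbound : ∀ t, T ≤ t → |g t| ≤ δ * t ^ ν := by
    intro t ht
    have h1 := (hT₁ t (le_trans (le_max_right _ _) ht)).1
    have ht0 : 0 < t := lt_of_lt_of_le hTpos ht
    rwa [Real.norm_eq_abs, Real.norm_eq_abs,
      abs_of_nonneg (Real.rpow_nonneg ht0.le ν)] at h1
  set C : ℝ := ∫ t in Ioc (0:ℝ) T, |g t| with hC_def
  -- main pointwise-in-p estimate
  have main : ∀ p : ℝ, 0 < p →
      ‖∫ t in Ioi (0:ℝ), Real.exp (-p * t) * g t‖ ≤ C + (ε / 2) * p ^ (-ν - 1) := by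
    intro p hp
    have hgexp : IntegrableOn (fun t => Real.exp (-p*t) * g t) (Ioi 0) := by
      have hAint : IntegrableOn (fun t => Real.exp (-p*t) * (A * t ^ ν)) (Ioi 0) :=
        (((hexp_int p hp).const_mul A).congr (ae_of_all _ fun t => by ring) : _)
      exact ((hfint p hp).sub hAint).congr (ae_of_all _ fun t => by simp [hg_def]; ring)
    have hsplit : (∫ t in Ioi (0:ℝ), Real.exp (-p * t) * g t)
        = (∫ t in Ioc (0:ℝ) T, Real.exp (-p * t) * g t)
          + ∫ t in Ioi T, Real.exp (-p * t) * g t := by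
      rw [← setIntegral_union (Ioc_disjoint_Ioi le_rfl) measurableSet_Ioi
        (hgexp.mono_set Ioc_subset_Ioi_self) (hgexp.mono_set (Ioi_subset_Ioi hTpos.le)),
        Ioc_union_Ioi_eq_Ioi hTpos.le]
    have hb1 : ‖∫ t in Ioc (0:ℝ) T, Real.exp (-p * t) * g t‖ ≤ C := by
      refine norm_integral_le_of_norm_le (hgI T hTpos).abs ?_
      rw [ae_restrict_iff' measurableSet_Ioc]
      refine ae_of_all _ fun t ht => ?_
      have he : Real.exp (-p * t) ≤ 1 := by
        rw [Real.exp_le_one_iff]; nlinarith [ht.1]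
      rw [Real.norm_eq_abs, abs_mul, abs_of_pos (Real.exp_pos _)]
      calc Real.exp (-p*t) * |g t| ≤ 1 * |g t| :=
            mul_le_mul_of_nonneg_right he (abs_nonneg _)
        _ = |g t| := one_mul _
    have hb2 : ‖∫ t in Ioi T, Real.exp (-p * t) * g t‖
        ≤ (ε / 2) * p ^ (-ν - 1) := by
      have hint2 : IntegrableOn (fun t => δ * (t ^ ν * Real.exp (-p*t))) (Ioi T) :=
        ((hexp_int p hp).mono_set (Ioi_subset_Ioi hTpos.le)).const_mul δ
      have h1 : ‖∫ t in Ioi T, Real.exp (-p * t) * g t‖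
          ≤ ∫ t in Ioi T, δ * (t ^ ν * Real.exp (-p*t)) := by
        refine norm_integral_le_of_norm_le hint2 ?_
        rw [ae_restrict_iff' measurableSet_Ioi]
        refine ae_of_all _ fun t ht => ?_
        have hgt := hTbound t (le_of_lt ht)
        rw [Real.norm_eq_abs, abs_mul, abs_of_pos (Real.exp_pos _)]
        calc Real.exp (-p*t) * |g t| ≤ Real.exp (-p*t) * (δ * t ^ ν) :=
              mul_le_mul_of_nonneg_left hgt (Real.exp_pos _).le
          _ = δ * (t ^ ν * Real.exp (-p*t)) := by ring
      have h2 : (∫ t in Ioi T, δ * (t ^ ν * Real.exp (-p*t)))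
          ≤ δ * (Real.Gamma (ν+1) * p ^ (-ν-1)) := by
        rw [integral_const_mul, ← hval p hp]
        refine mul_le_mul_of_nonneg_left ?_ hδpos.le
        refine setIntegral_mono_set (hexp_int p hp) ?_
          ((Ioi_subset_Ioi hTpos.le).eventuallyLE)
        rw [EventuallyLE, ae_restrict_iff' measurableSet_Ioi]
        exact ae_of_all _ fun t ht =>
          mul_nonneg (Real.rpow_nonneg (le_of_lt ht) _) (Real.exp_pos _).le
      have h3 : δ * (Real.Gamma (ν+1) * p ^ (-ν-1)) ≤ (ε/2) * p ^ (-ν-1) := by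
        have hppos : (0:ℝ) ≤ p ^ (-ν-1) := Real.rpow_nonneg hp.le _
        have : δ * Real.Gamma (ν+1) ≤ ε/2 := by
          rw [hδ_def, div_mul_eq_mul_div, div_le_div_iff₀ (by positivity) (by norm_num)]
          nlinarith
        nlinarith
      linarith
    calc ‖∫ t in Ioi (0:ℝ), Real.exp (-p * t) * g t‖
        ≤ ‖∫ t in Ioc (0:ℝ) T, Real.exp (-p * t) * g t‖
          + ‖∫ t in Ioi T, Real.exp (-p * t) * g t‖ := by
          rw [hsplit]; exact norm_add_le _ _
      _ ≤ C + (ε / 2) * p ^ (-ν - 1) := add_le_add hb1 hb2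
  -- p ^ (-ν-1) → ∞ as p → 0⁺
  have htend : Tendsto (fun p : ℝ => p ^ (-ν - 1)) (nhdsWithin 0 (Ioi 0)) atTop := by
    have h1 : Tendsto (fun p : ℝ => (p⁻¹) ^ (ν + 1)) (nhdsWithin 0 (Ioi 0)) atTop :=
      (tendsto_rpow_atTop hν1).comp tendsto_inv_nhdsGT_zero
    refine h1.congr' ?_
    filter_upwards [self_mem_nhdsWithin] with p (hp : (0:ℝ) < p)
    rw [Real.inv_rpow hp.le, ← Real.rpow_neg hp.le]
    ring_nf
  have hev : ∀ᶠ p in nhdsWithin (0:ℝ) (Ioi 0), 2 * C / ε ≤ p ^ (-ν - 1) :=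
    htend.eventually_ge_atTop _
  filter_upwards [self_mem_nhdsWithin, hev] with p (hp : (0:ℝ) < p) hp2
  have hppos : (0:ℝ) ≤ p ^ (-ν - 1) := Real.rpow_nonneg hp.le _
  have hC : C ≤ (ε / 2) * p ^ (-ν - 1) := by
    rw [div_le_iff₀ (by positivity)] at hp2
    nlinarith
  calc ‖(∫ t in Ioi (0:ℝ), Real.exp (-p * t) * f t)
      - A * Real.Gamma (ν + 1) * p ^ (-ν - 1)‖
      = ‖∫ t in Ioi (0:ℝ), Real.exp (-p * t) * g t‖ := by rw [key p hp]
    _ ≤ C + (ε / 2) * p ^ (-ν - 1) := main p hp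
    _ ≤ (ε / 2) * p ^ (-ν - 1) + (ε / 2) * p ^ (-ν - 1) := by linarith
    _ = ε * p ^ (-ν - 1) := by ring
    _ = ε * ‖p ^ (-ν - 1)‖ := by rw [Real.norm_eq_abs, abs_of_nonneg hppos]
end

section
/- Injectivity of the Laplace transform: if f, g : [0,∞) → ℝ are continuous functions of exponential order and L(f)(p) = L(g)(p) for all sufficiently large real p, then f = g. -/
open MeasureTheory Set
lemma lap_integrable (f : ℝ → ℝ) (hf : ContinuousOn f (Ici 0)) {M c p : ℝ}
    (hb : ∀ t ≥ (0:ℝ), |f t| ≤ M * Real.exp (c * t)) (hp : c < p) :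
    IntegrableOn (fun t => Real.exp (-p * t) * f t) (Ioi 0) := by
  apply Integrable.mono' ((exp_neg_integrableOn_Ioi 0 (show (0:ℝ) < p - c by linarith)).const_mul M)
  · exact ((Real.continuous_exp.comp (continuous_const.mul continuous_id)).continuousOn.mul
      (hf.mono (Ioi_subset_Ici le_rfl))).aestronglyMeasurable measurableSet_Ioi
  · filter_upwards [ae_restrict_mem measurableSet_Ioi] with t ht
    have ht' : (0:ℝ) ≤ t := le_of_lt ht
    have h1 : |f t| ≤ M * Real.exp (c * t) := hb t ht'
    have : ‖Real.exp (-p * t) * f t‖ = Real.exp (-p * t) * |f t| := by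
      rw [Real.norm_eq_abs, abs_mul, abs_of_pos (Real.exp_pos _)]
    rw [this]
    calc Real.exp (-p * t) * |f t| ≤ Real.exp (-p * t) * (M * Real.exp (c * t)) := by
          exact mul_le_mul_of_nonneg_left h1 (Real.exp_pos _).le
      _ = M * Real.exp (-(p - c) * t) := by rw [show -(p - c) * t = -p * t + c * t by ring, Real.exp_add]; ring

lemma lap_zero (h : ℝ → ℝ) (hh : ContinuousOn h (Ici 0)) {M c : ℝ} (hM : 0 ≤ M) (hc : 0 ≤ c)
    (hb : ∀ t ≥ (0:ℝ), |h t| ≤ M * Real.exp (c * t)) {a : ℝ} (ha : c + 2 ≤ a)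
    (hz : ∀ n : ℕ, ∫ t in Ioi (0:ℝ), Real.exp (-(a + n) * t) * h t = 0) :
    ∀ t ≥ (0:ℝ), h t = 0 := by
  set φ : ℝ → ℝ := fun x => x ^ (a - 1) * h (-Real.log x) with hφdef
  have ha1 : (1:ℝ) ≤ a - 1 := by linarith
  -- value of φ at exp(-t)
  have hφexp : ∀ t : ℝ, φ (Real.exp (-t)) = Real.exp (-(a-1) * t) * h t := by
    intro t
    have hpos := Real.exp_pos (-t)
    simp only [hφdef, Real.log_exp, neg_neg]
    rw [Real.rpow_def_of_pos hpos, Real.log_exp]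
    ring_nf
  -- change of variables: the moments vanish
  have hmom : ∀ n : ℕ, ∫ x in Ioo (0:ℝ) 1, x ^ n * φ x = 0 := by
    intro n
    have himg : (fun t : ℝ => Real.exp (-t)) '' Ioi 0 = Ioo 0 1 := by
      ext x
      constructor
      · rintro ⟨t, ht, rfl⟩
        exact ⟨Real.exp_pos _, by
          rw [Real.exp_lt_one_iff]; simpa using ht⟩
      · rintro ⟨hx0, hx1⟩
        exact ⟨-Real.log x, by simpa using Real.log_neg hx0 hx1, by
          simp [Real.exp_log hx0]⟩
    have hderiv : ∀ t ∈ Ioi (0:ℝ), HasDerivWithinAt (fun t : ℝ => Real.exp (-t))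
        (-Real.exp (-t)) (Ioi 0) t := by
      intro t _
      simpa [Function.comp_def] using ((Real.hasDerivAt_exp (-t)).comp t (hasDerivAt_neg t)).hasDerivWithinAt
    have hinj : InjOn (fun t : ℝ => Real.exp (-t)) (Ioi 0) := fun t1 _ t2 _ e =>
      neg_injective (Real.exp_injective e)
    have := integral_image_eq_integral_abs_deriv_smul measurableSet_Ioi hderiv hinj
      (fun x => x ^ n * φ x)
    rw [himg] at this
    rw [this]
    rw [show (∫ x in Ioi (0:ℝ), |(-Real.exp (-x))| • (Real.exp (-x) ^ n * φ (Real.exp (-x))))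
        = ∫ t in Ioi (0:ℝ), Real.exp (-(a + n) * t) * h t from
      setIntegral_congr_fun measurableSet_Ioi (fun t ht => ?_), hz n]
    have hpos := Real.exp_pos (-t)
    rw [abs_neg, abs_of_pos hpos]
    simp only [smul_eq_mul, hφexp t]
    rw [← Real.exp_nat_mul]
    rw [show -(a + (n:ℝ)) * t = -t + ((n:ℝ) * -t + -(a - 1) * t) by ring, Real.exp_add,
      Real.exp_add]
    ring
  -- continuity of φ on (0,1]
  have hψ : ContinuousOn (fun x => h (-Real.log x)) (Ioc 0 1) := by
    apply hh.comp ((Real.continuousOn_log.mono fun x hx => ne_of_gt hx.1).neg)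
    intro x hx
    simp only [mem_Ici, Pi.neg_apply, neg_nonneg]
    exact Real.log_nonpos hx.1.le hx.2
  have hφIoc : ContinuousOn φ (Ioc 0 1) := by
    apply ContinuousOn.mul ?_ hψ
    intro x hx
    exact (Real.continuousAt_rpow_const x (a-1) (Or.inl (ne_of_gt hx.1))).continuousWithinAt
  -- continuity of φ at 0 within Icc 0 1
  have hφ0val : φ 0 = 0 := by
    simp [hφdef, Real.zero_rpow (show a - 1 ≠ 0 by linarith)]
  have hbound : ∀ x ∈ Icc (0:ℝ) 1, |φ x| ≤ M * x ^ (a-1-c) := by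
    intro x hx
    rcases eq_or_lt_of_le hx.1 with h0 | h0
    · rw [← h0, hφ0val, Real.zero_rpow (show a - 1 - c ≠ 0 by linarith), abs_zero, mul_zero]
    · have hlog : -Real.log x ≥ 0 := by
        simp only [ge_iff_le, le_neg, neg_zero]
        exact Real.log_nonpos h0.le hx.2
      have h1 : |h (-Real.log x)| ≤ M * Real.exp (c * -Real.log x) := hb _ hlog
      have h2 : Real.exp (c * -Real.log x) = x ^ (-c) := by
        rw [Real.rpow_def_of_pos h0]; ring_nf
      have h3 : (0:ℝ) ≤ x ^ (a - 1) := (Real.rpow_pos_of_pos h0 _).le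
      calc |φ x| = x ^ (a-1) * |h (-Real.log x)| := by
            rw [hφdef]; rw [abs_mul, abs_of_nonneg h3]
        _ ≤ x ^ (a-1) * (M * Real.exp (c * -Real.log x)) :=
            mul_le_mul_of_nonneg_left h1 h3
        _ = M * (x ^ (a-1) * x ^ (-c)) := by rw [h2]; ring
        _ = M * x ^ (a-1-c) := by rw [← Real.rpow_add h0]; ring_nf
  have hφc : ContinuousOn φ (Icc 0 1) := by
    intro x hx
    rcases eq_or_lt_of_le hx.1 with h0 | h0
    · rw [← h0]
      rw [ContinuousWithinAt, hφ0val]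
      have hev : ∀ᶠ y in nhdsWithin (0:ℝ) (Icc 0 1), ‖φ y‖ ≤ M * y ^ (a-1-c) := by
        filter_upwards [self_mem_nhdsWithin] with y hy
        exact hbound y hy
      apply squeeze_zero_norm' hev
      have h4 : ContinuousWithinAt (fun y : ℝ => y ^ (a-1-c)) (Icc (0:ℝ) 1) 0 :=
        (Real.continuousAt_rpow_const 0 (a-1-c) (Or.inr (by linarith))).continuousWithinAt
      have h5 := h4.const_smul M
      rw [ContinuousWithinAt] at h5
      simp only [Pi.smul_apply, smul_eq_mul, Real.zero_rpow (show a - 1 - c ≠ 0 by linarith),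
        mul_zero] at h5
      exact h5
    · have hIc : Icc (0:ℝ) 1 ∩ Ioi 0 = Ioc 0 1 := by
        ext y
        simp only [mem_inter_iff, mem_Icc, mem_Ioi, mem_Ioc]
        constructor
        · rintro ⟨⟨_, h2⟩, h3⟩; exact ⟨h3, h2⟩
        · rintro ⟨h2, h3⟩; exact ⟨⟨h2.le, h3⟩, h2⟩
      have hmem : Ioc (0:ℝ) 1 ∈ nhdsWithin x (Icc 0 1) := by
        rw [← hIc]
        exact inter_mem_nhdsWithin _ (Ioi_mem_nhds h0)
      exact (hφIoc x ⟨h0, hx.2⟩).mono_of_mem_nhdsWithin hmem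
  -- integrability helper
  have hint : ∀ q : ℝ → ℝ, ContinuousOn q (Icc 0 1) → IntegrableOn q (Ioo 0 1) :=
    fun q hq => (hq.integrableOn_compact isCompact_Icc).mono_set Ioo_subset_Icc_self
  -- polynomial moments vanish
  have hpoly : ∀ P : Polynomial ℝ, ∫ x in Ioo (0:ℝ) 1, P.eval x * φ x = 0 := by
    intro P
    induction P using Polynomial.induction_on' with
    | add p q hp hq =>
      simp only [Polynomial.eval_add, add_mul]
      rw [integral_add (hint (fun x => p.eval x * φ x) (p.continuous.continuousOn.mul hφc))
        (hint (fun x => q.eval x * φ x) (q.continuous.continuousOn.mul hφc)), hp, hq, add_zero]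
    | monomial n b =>
      simp only [Polynomial.eval_monomial]
      have : ∀ x : ℝ, b * x ^ n * φ x = b * (x ^ n * φ x) := fun x => by ring
      simp only [this]
      rw [integral_const_mul, hmom n, mul_zero]
  -- the L² norm of φ vanishes
  set C := ∫ x in Ioo (0:ℝ) 1, |φ x| with hC
  have hC0 : 0 ≤ C := integral_nonneg fun x => abs_nonneg _
  have hintφ2 : IntegrableOn (fun x => φ x * φ x) (Ioo 0 1) := hint _ (hφc.mul hφc)
  have hintabs : IntegrableOn (fun x => |φ x|) (Ioo 0 1) := hint _ hφc.abs
  have hIle : (∫ x in Ioo (0:ℝ) 1, φ x * φ x) ≤ 0 := by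
    apply le_of_forall_pos_le_add
    intro ε hε
    obtain ⟨P, hP⟩ := exists_polynomial_near_of_continuousOn 0 1 φ hφc (ε/(C+1))
      (by positivity)
    have hintP : IntegrableOn (fun x => P.eval x * φ x) (Ioo 0 1) :=
      hint _ (P.continuous.continuousOn.mul hφc)
    have hd : ∀ x ∈ Ioo (0:ℝ) 1, φ x * φ x - P.eval x * φ x ≤ (ε/(C+1)) * |φ x| := by
      intro x hx
      have h1 : |φ x - P.eval x| ≤ ε/(C+1) := by
        rw [abs_sub_comm]; exact (hP x (Ioo_subset_Icc_self hx)).le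
      calc φ x * φ x - P.eval x * φ x = (φ x - P.eval x) * φ x := by ring
        _ ≤ |(φ x - P.eval x) * φ x| := le_abs_self _
        _ = |φ x - P.eval x| * |φ x| := abs_mul _ _
        _ ≤ (ε/(C+1)) * |φ x| := mul_le_mul_of_nonneg_right h1 (abs_nonneg _)
    have hmono := setIntegral_mono_on (hintφ2.sub hintP) (hintabs.const_mul (ε/(C+1)))
      measurableSet_Ioo hd
    simp only [Pi.sub_apply] at hmono
    rw [integral_sub hintφ2 hintP, hpoly P, sub_zero, integral_const_mul] at hmono
    calc (∫ x in Ioo (0:ℝ) 1, φ x * φ x) ≤ (ε/(C+1)) * C := hmono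
      _ ≤ ε := by
          rw [div_mul_eq_mul_div, div_le_iff₀ (by linarith)]
          nlinarith
      _ = 0 + ε := by rw [zero_add]
  have hIeq : (∫ x in Ioo (0:ℝ) 1, φ x * φ x) = 0 :=
    le_antisymm hIle (integral_nonneg fun x => mul_self_nonneg _)
  have hae : (fun x => φ x * φ x) =ᵐ[volume.restrict (Ioo (0:ℝ) 1)] 0 :=
    (setIntegral_eq_zero_iff_of_nonneg_ae
      (Filter.Eventually.of_forall fun x => mul_self_nonneg _) hintφ2).mp hIeq
  have haeφ : φ =ᵐ[volume.restrict (Icc (0:ℝ) 1)] 0 := by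
    rw [← Measure.restrict_congr_set Ioo_ae_eq_Icc]
    filter_upwards [hae] with x hx
    exact mul_self_eq_zero.mp hx
  have hEq : EqOn φ 0 (Icc (0:ℝ) 1) :=
    Measure.eqOn_Icc_of_ae_eq volume (show (0:ℝ) ≠ 1 by norm_num) haeφ hφc continuousOn_const
  -- conclude
  intro t ht
  have hx : Real.exp (-t) ∈ Icc (0:ℝ) 1 :=
    ⟨(Real.exp_pos _).le, by rw [← Real.exp_zero]; exact Real.exp_le_exp.mpr (by linarith)⟩
  have h0 := hEq hx
  rw [hφexp t] at h0
  simp only [Pi.zero_apply] at h0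
  rcases mul_eq_zero.mp h0 with h1 | h1
  · exact absurd h1 (Real.exp_ne_zero _)
  · exact h1


theorem laplace_injective (f g : ℝ → ℝ)
    (hf : ContinuousOn f (Ici 0)) (hg : ContinuousOn g (Ici 0))
    (hfexp : ∃ M c, ∀ t ≥ (0 : ℝ), |f t| ≤ M * Real.exp (c * t))
    (hgexp : ∃ M c, ∀ t ≥ (0 : ℝ), |g t| ≤ M * Real.exp (c * t))
    (hL : ∃ p₀ : ℝ, ∀ p ≥ p₀,
      ∫ t in Ioi (0 : ℝ), Real.exp (-p * t) * f t
        = ∫ t in Ioi (0 : ℝ), Real.exp (-p * t) * g t) :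
    ∀ t ≥ (0 : ℝ), f t = g t := by
  obtain ⟨Mf, cf, hMf⟩ := hfexp
  obtain ⟨Mg, cg, hMg⟩ := hgexp
  obtain ⟨p₀, hp₀⟩ := hL
  set c := max (max cf cg) 0 with hcdef
  have hc0 : 0 ≤ c := le_max_right _ _
  have hcf : cf ≤ c := le_trans (le_max_left _ _) (le_max_left _ _)
  have hcg : cg ≤ c := le_trans (le_max_right _ _) (le_max_left _ _)
  have hbf : ∀ t ≥ (0:ℝ), |f t| ≤ |Mf| * Real.exp (c * t) := by
    intro t ht
    calc |f t| ≤ Mf * Real.exp (cf * t) := hMf t ht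
      _ ≤ |Mf| * Real.exp (c * t) :=
        mul_le_mul (le_abs_self Mf)
          (Real.exp_le_exp.mpr (mul_le_mul_of_nonneg_right hcf ht))
          (Real.exp_pos _).le (abs_nonneg _)
  have hbg : ∀ t ≥ (0:ℝ), |g t| ≤ |Mg| * Real.exp (c * t) := by
    intro t ht
    calc |g t| ≤ Mg * Real.exp (cg * t) := hMg t ht
      _ ≤ |Mg| * Real.exp (c * t) :=
        mul_le_mul (le_abs_self Mg)
          (Real.exp_le_exp.mpr (mul_le_mul_of_nonneg_right hcg ht))
          (Real.exp_pos _).le (abs_nonneg _)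
  set a := max p₀ (c + 2) with hadef
  have hb : ∀ t ≥ (0:ℝ), |f t - g t| ≤ (|Mf| + |Mg|) * Real.exp (c * t) := by
    intro t ht
    calc |f t - g t| ≤ |f t| + |g t| := abs_sub _ _
      _ ≤ |Mf| * Real.exp (c * t) + |Mg| * Real.exp (c * t) :=
        add_le_add (hbf t ht) (hbg t ht)
      _ = (|Mf| + |Mg|) * Real.exp (c * t) := by ring
  have hzn : ∀ n : ℕ, ∫ t in Ioi (0:ℝ),
      Real.exp (-(a + n) * t) * (f t - g t) = 0 := by
    intro n
    have hca : c < a + n := by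
      have h1 : c + 2 ≤ a := le_max_right _ _
      have h2 : (0:ℝ) ≤ n := Nat.cast_nonneg n
      linarith
    have hif : IntegrableOn (fun t => Real.exp (-(a + n) * t) * f t) (Ioi 0) :=
      lap_integrable f hf hbf hca
    have hig : IntegrableOn (fun t => Real.exp (-(a + n) * t) * g t) (Ioi 0) :=
      lap_integrable g hg hbg hca
    have hp : p₀ ≤ a + n := by
      have h2 : (0:ℝ) ≤ n := Nat.cast_nonneg n
      have h3 : p₀ ≤ a := le_max_left _ _
      linarith
    simp only [mul_sub]
    rw [integral_sub hif hig, hp₀ (a + n) hp, sub_self]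
  have := lap_zero (fun t => f t - g t) (hf.sub hg)
    (show (0:ℝ) ≤ |Mf| + |Mg| by positivity) hc0 hb (le_max_right p₀ (c + 2)) hzn
  intro t ht
  have h0 := this t ht
  linarith
end
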